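/- Let B₁, B₂ ∈ ℝ² be anchors, P_f ∈ ℝ² a final point, P₀, P₁ ∈ ℝ² measurement points with P₀ ≠ B₁, P₁ ≠ B₁ and B₁, P₀, P₁ non-collinear, and P₂ ∈ ℝ² a measurement point with P₂ ≠ B₂. Then the three vectors γ(B₁, P₀, P_f), γ(B₁, P₁, P_f), γ(B₂, P₂, P_f) span ℝ³ if and only if B₁, B₂, P₂ are non-collinear. -/

import Mathlib

lemma span_triple_eq_top_iff (v0 v1 v2 : Fin 3 → ℝ) :
    Submodule.span ℝ ({v0, v1, v2} : Set (Fin 3 → ℝ)) = ⊤ ↔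
      (Matrix.of ![v0, v1, v2]).det ≠ 0 := by
  have hr : ({v0, v1, v2} : Set (Fin 3 → ℝ)) = Set.range (Matrix.of ![v0, v1, v2]) := by
    ext x
    constructor
    · rintro (rfl | rfl | rfl)
      exacts [⟨0, rfl⟩, ⟨1, rfl⟩, ⟨2, rfl⟩]
    · rintro ⟨i, rfl⟩
      fin_cases i
      exacts [Or.inl rfl, Or.inr (Or.inl rfl), Or.inr (Or.inr rfl)]
  rw [hr, show Set.range (Matrix.of ![v0, v1, v2]) = Set.range (Matrix.row (Matrix.of ![v0, v1, v2])) from rfl,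
    ← range_vecMulLinear, LinearMap.range_eq_top]
  rw [Matrix.coe_vecMulLinear, Matrix.vecMul_surjective_iff_isUnit, Matrix.isUnit_iff_isUnit_det, isUnit_iff_ne_zero]

lemma collinear_iff_cross (A B C : EuclideanSpace ℝ (Fin 2)) :
    Collinear ℝ ({A, B, C} : Set (EuclideanSpace ℝ (Fin 2))) ↔
      (B 0 - A 0) * (C 1 - A 1) - (B 1 - A 1) * (C 0 - A 0) = 0 := by
  rw [collinear_iff_of_mem (Set.mem_insert A {B, C})]
  constructor
  · rintro ⟨v, hv⟩
    obtain ⟨tB, hB⟩ := hv B (by simp)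
    obtain ⟨tC, hC⟩ := hv C (by simp)
    have hB0 := congrArg (fun x => x 0) hB
    have hB1 := congrArg (fun x => x 1) hB
    have hC0 := congrArg (fun x => x 0) hC
    have hC1 := congrArg (fun x => x 1) hC
    simp only [vadd_eq_add, PiLp.add_apply, PiLp.smul_apply, smul_eq_mul] at hB0 hB1 hC0 hC1
    rw [hB0, hB1, hC0, hC1]; ring
  · intro h
    by_cases hBA : B = A
    · refine ⟨C - A, fun p hp => ?_⟩
      rcases hp with rfl | rfl | rfl
      · exact ⟨0, by simp⟩
      · exact ⟨0, by simp [hBA]⟩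
      · exact ⟨1, by simp⟩
    · refine ⟨B - A, fun p hp => ?_⟩
      rcases hp with rfl | rfl | rfl
      · exact ⟨0, by simp⟩
      · exact ⟨1, by simp⟩
      · have hne : B 0 - A 0 ≠ 0 ∨ B 1 - A 1 ≠ 0 := by
          by_contra hcon
          push_neg at hcon
          apply hBA
          ext i
          fin_cases i <;>
            [exact sub_eq_zero.1 hcon.1; exact sub_eq_zero.1 hcon.2]
        rcases hne with hne | hne
        · refine ⟨(p 0 - A 0) / (B 0 - A 0), ?_⟩
          ext i
          fin_cases i <;>
            simp only [vadd_eq_add, PiLp.add_apply, PiLp.smul_apply, PiLp.sub_apply,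
              smul_eq_mul, Fin.zero_eta, Fin.mk_one]
          · field_simp
            ring
          · field_simp
            linear_combination h
        · refine ⟨(p 1 - A 1) / (B 1 - A 1), ?_⟩
          ext i
          fin_cases i <;>
            simp only [vadd_eq_add, PiLp.add_apply, PiLp.smul_apply, PiLp.sub_apply,
              smul_eq_mul, Fin.zero_eta, Fin.mk_one]
          · field_simp
            linear_combination -h
          · field_simp
            ring

/-- The rank-one information vector of a single range measurement from anchor `B`
taken at point `P`, for final point `Pf` (plane identified with Euclidean `ℝ²`). -/
noncomputable def gamma (B P Pf : EuclideanSpace ℝ (Fin 2)) : Fin 3 → ℝ :=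
  ![(P 0 - B 0) / ‖P - B‖,
    (P 1 - B 1) / ‖P - B‖,
    ((Pf 0 - P 0) * (B 1 - P 1) - (Pf 1 - P 1) * (B 0 - P 0)) / ‖P - B‖]

/-- 2+1 local analysis: the three information vectors span `ℝ³` iff the third
measurement point is not aligned with the two anchors. -/
theorem two_plus_one_span_iff_noncollinear
    (B1 B2 Pf P0 P1 P2 : EuclideanSpace ℝ (Fin 2))
    (h0 : P0 ≠ B1) (h1 : P1 ≠ B1)
    (hnc : ¬ Collinear ℝ ({B1, P0, P1} : Set (EuclideanSpace ℝ (Fin 2))))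
    (h2 : P2 ≠ B2) :
    Submodule.span ℝ ({gamma B1 P0 Pf, gamma B1 P1 Pf, gamma B2 P2 Pf} :
        Set (Fin 3 → ℝ)) = ⊤ ↔
      ¬ Collinear ℝ ({B1, B2, P2} : Set (EuclideanSpace ℝ (Fin 2))) := by
  have hr0 : ‖P0 - B1‖ ≠ 0 := norm_ne_zero_iff.2 (sub_ne_zero.2 h0)
  have hr1 : ‖P1 - B1‖ ≠ 0 := norm_ne_zero_iff.2 (sub_ne_zero.2 h1)
  have hr2 : ‖P2 - B2‖ ≠ 0 := norm_ne_zero_iff.2 (sub_ne_zero.2 h2)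
  have hc01 : (P0 0 - B1 0) * (P1 1 - B1 1) - (P0 1 - B1 1) * (P1 0 - B1 0) ≠ 0 := by
    rw [collinear_iff_cross] at hnc; exact hnc
  have hdet : (Matrix.of ![gamma B1 P0 Pf, gamma B1 P1 Pf, gamma B2 P2 Pf]).det =
      (((P0 0 - B1 0) * (P1 1 - B1 1) - (P0 1 - B1 1) * (P1 0 - B1 0)) *
        ((B2 0 - B1 0) * (P2 1 - B1 1) - (B2 1 - B1 1) * (P2 0 - B1 0))) /
        (‖P0 - B1‖ * ‖P1 - B1‖ * ‖P2 - B2‖) := by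
    rw [Matrix.det_fin_three]
    simp only [Matrix.of_apply, Matrix.cons_val_zero, Matrix.cons_val_one,
      Matrix.head_cons, Matrix.cons_val_two,
      Matrix.tail_cons, gamma]
    field_simp
    ring
  rw [span_triple_eq_top_iff, collinear_iff_cross, hdet, div_ne_zero_iff]
  constructor
  · rintro ⟨hnum, -⟩ hz
    exact hnum (by rw [hz, mul_zero])
  · intro hz
    exact ⟨mul_ne_zero hc01 hz, mul_ne_zero (mul_ne_zero hr0 hr1) hr2⟩
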